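/- For every natural number i, ∑_{j=0}^{i} q_{ij} = (2i+1)·Cᵢ, where Cᵢ is the i-th Catalan number. (Since q_{ij} = 0 for j > i, this says the i-th row sum of D(𝕃^S)⁻¹D is (2i+1)Cᵢ.) -/

import Mathlib

open PowerSeries Finset

/-- The generating function of the Catalan numbers. -/
noncomputable def catalanGF : PowerSeries ℝ :=
  PowerSeries.mk fun n => (catalan n : ℝ)

/-- The generating function `W(x) = ∑ binom(2n,n) xⁿ` of the central binomial coefficients. -/
noncomputable def centralBinomGF : PowerSeries ℝ :=
  PowerSeries.mk fun n => ((2 * n).choose n : ℝ)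

/-- `q i j` is the coefficient of `x^i` in `W(x)·(xC(x))^j`, i.e. the `(i,j)` entry of
`D(𝕃^S)⁻¹D`. -/
noncomputable def qEntry (i j : ℕ) : ℝ :=
  PowerSeries.coeff (R := ℝ) i (centralBinomGF * (PowerSeries.X * catalanGF) ^ j)

lemma catalanGF_eq : catalanGF = 1 + PowerSeries.X * catalanGF ^ 2 := by
  ext n
  cases n with
  | zero => simp [catalanGF]
  | succ n =>
    rw [map_add, sq, coeff_succ_X_mul]
    have h1 : (PowerSeries.coeff (R := ℝ) (n + 1)) (1 : PowerSeries ℝ) = 0 := by simp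
    rw [h1, zero_add, PowerSeries.coeff_mul, catalanGF, coeff_mk, catalan_succ' n]
    push_cast
    exact Finset.sum_congr rfl fun p _ => by simp [coeff_mk]

lemma catalanGF_inv : (1 - PowerSeries.X * catalanGF) * catalanGF = 1 := by
  have h := catalanGF_eq
  calc (1 - PowerSeries.X * catalanGF) * catalanGF
      = catalanGF - PowerSeries.X * catalanGF ^ 2 := by ring
    _ = (1 + PowerSeries.X * catalanGF ^ 2) - PowerSeries.X * catalanGF ^ 2 := by rw [← h]
    _ = 1 := by ring

lemma choose_eq_catalan (k : ℕ) : ((2 * k).choose k : ℝ) = ((k : ℝ) + 1) * (catalan k : ℝ) := by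
  have h := succ_mul_catalan_eq_centralBinom k
  rw [Nat.centralBinom] at h
  push_cast [← h]
  ring

lemma catalan_sum_real (i : ℕ) :
    ∑ k ∈ Finset.range (i + 1), (catalan k : ℝ) * (catalan (i - k) : ℝ) = (catalan (i + 1) : ℝ) := by
  rw [catalan_succ' i, ← Finset.Nat.sum_antidiagonal_eq_sum_range_succ_mk
    (fun p => (catalan p.1 : ℝ) * (catalan p.2 : ℝ))]
  push_cast
  rfl

lemma catalan_ratio (i : ℕ) :
    ((i : ℝ) + 2) * (catalan (i + 1) : ℝ) = 2 * (2 * (i : ℝ) + 1) * (catalan i : ℝ) := by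
  have h1 := succ_mul_catalan_eq_centralBinom (i + 1)
  have h2 := Nat.succ_mul_centralBinom_succ i
  have h3 := succ_mul_catalan_eq_centralBinom i
  have h1' : ((i : ℝ) + 1 + 1) * (catalan (i + 1) : ℝ) = ((i + 1).centralBinom : ℝ) := by
    exact_mod_cast congrArg (Nat.cast : ℕ → ℝ) h1
  have h2' : ((i : ℝ) + 1) * ((i + 1).centralBinom : ℝ) = 2 * (2 * i + 1) * (i.centralBinom : ℝ) := by
    exact_mod_cast congrArg (Nat.cast : ℕ → ℝ) h2
  have h3' : ((i : ℝ) + 1) * (catalan i : ℝ) = (i.centralBinom : ℝ) := by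
    exact_mod_cast congrArg (Nat.cast : ℕ → ℝ) h3
  have hi : (i : ℝ) + 1 ≠ 0 := by positivity
  have : ((i : ℝ) + 1) * (((i : ℝ) + 2) * (catalan (i + 1) : ℝ)) =
      ((i : ℝ) + 1) * (2 * (2 * (i : ℝ) + 1) * (catalan i : ℝ)) := by
    rw [show ((i:ℝ)+1) * (((i:ℝ)+2) * (catalan (i+1) : ℝ))
        = ((i:ℝ)+1) * (((i:ℝ)+1+1) * (catalan (i+1) : ℝ)) by ring, h1', h2', ← h3']
    ring
  exact mul_left_cancel₀ hi this

lemma key_sum (i : ℕ) :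
    ∑ k ∈ Finset.range (i + 1), ((2 * k).choose k : ℝ) * (catalan (i - k) : ℝ)
      = (2 * (i : ℝ) + 1) * (catalan i : ℝ) := by
  set L := ∑ k ∈ Finset.range (i + 1), ((2 * k).choose k : ℝ) * (catalan (i - k) : ℝ) with hL
  have hL1 : L = ∑ k ∈ Finset.range (i + 1),
      ((k : ℝ) + 1) * ((catalan k : ℝ) * (catalan (i - k) : ℝ)) := by
    rw [hL]
    exact Finset.sum_congr rfl fun k _ => by rw [choose_eq_catalan]; ring
  have hL2 : L = ∑ k ∈ Finset.range (i + 1),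
      (((i - k : ℕ) : ℝ) + 1) * ((catalan k : ℝ) * (catalan (i - k) : ℝ)) := by
    rw [hL1, ← Finset.sum_range_reflect]
    refine Finset.sum_congr rfl fun k hk => ?_
    rw [Finset.mem_range] at hk
    have hk' : k ≤ i := Nat.lt_succ_iff.mp hk
    rw [show i + 1 - 1 - k = i - k by omega, show i - (i - k) = k by omega]
    ring
  have h2L : 2 * L = ((i : ℝ) + 2) * (catalan (i + 1) : ℝ) := by
    have : 2 * L = ∑ k ∈ Finset.range (i + 1),
        (((k : ℝ) + 1) + (((i - k : ℕ) : ℝ) + 1)) * ((catalan k : ℝ) * (catalan (i - k) : ℝ)) := by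
      rw [two_mul]
      nth_rewrite 1 [hL1]
      nth_rewrite 1 [hL2]
      rw [← Finset.sum_add_distrib]
      exact Finset.sum_congr rfl fun k _ => by ring
    rw [this, ← catalan_sum_real i, Finset.mul_sum]
    refine Finset.sum_congr rfl fun k hk => ?_
    rw [Finset.mem_range] at hk
    have : ((i - k : ℕ) : ℝ) = (i : ℝ) - (k : ℝ) := by
      have : k ≤ i := Nat.lt_succ_iff.mp hk
      push_cast [this]; ring
    rw [this]; ring
  have := catalan_ratio i
  linarith [h2L, this]

/-- The `i`-th row sum of `D(𝕃^S)⁻¹D` is `(2i+1)·Cᵢ`. -/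
theorem stmt_8 (i : ℕ) :
    ∑ j ∈ Finset.range (i + 1), qEntry i j = (2 * (i : ℝ) + 1) * (catalan i : ℝ) := by
  classical
  set C := catalanGF with hC
  set W := centralBinomGF with hW
  have hsum : ∑ j ∈ Finset.range (i + 1), qEntry i j =
      PowerSeries.coeff (R := ℝ) i (W * ∑ j ∈ Finset.range (i + 1), (PowerSeries.X * C) ^ j) := by
    rw [Finset.mul_sum, map_sum]
    rfl
  -- geometric sum identity
  have hgeom : (∑ j ∈ Finset.range (i + 1), (PowerSeries.X * C) ^ j) =
      C - (PowerSeries.X * C) ^ (i + 1) * C := by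
    have hg := geom_sum_mul (PowerSeries.X * C) (i + 1)
    have := congrArg (· * (-C)) hg
    calc (∑ j ∈ Finset.range (i + 1), (PowerSeries.X * C) ^ j)
        = (∑ j ∈ Finset.range (i + 1), (PowerSeries.X * C) ^ j) *
            ((1 - PowerSeries.X * C) * C) := by rw [catalanGF_inv]; ring
      _ = (∑ j ∈ Finset.range (i + 1), (PowerSeries.X * C) ^ j) *
            (PowerSeries.X * C - 1) * (-C) := by ring
      _ = ((PowerSeries.X * C) ^ (i + 1) - 1) * (-C) := by rw [hg]
      _ = C - (PowerSeries.X * C) ^ (i + 1) * C := by ring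
  rw [hsum, hgeom]
  have hvanish : PowerSeries.coeff (R := ℝ) i (W * ((PowerSeries.X * C) ^ (i + 1) * C)) = 0 := by
    have hdvd : (PowerSeries.X : PowerSeries ℝ) ^ (i + 1) ∣
        W * ((PowerSeries.X * C) ^ (i + 1) * C) := by
      refine Dvd.intro (W * (C ^ (i + 1) * C)) ?_
      rw [mul_pow]; ring
    exact PowerSeries.X_pow_dvd_iff.mp hdvd i (Nat.lt_succ_self i)
  rw [mul_sub, map_sub, hvanish, sub_zero]
  rw [PowerSeries.coeff_mul, Finset.Nat.sum_antidiagonal_eq_sum_range_succ_mk]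
  have : ∀ k ∈ Finset.range (i + 1),
      PowerSeries.coeff (R := ℝ) k W * PowerSeries.coeff (R := ℝ) (i - k) C
        = ((2 * k).choose k : ℝ) * (catalan (i - k) : ℝ) := by
    intro k _
    rw [hW, hC, centralBinomGF, catalanGF, coeff_mk, coeff_mk]
  rw [Finset.sum_congr rfl this]
  exact key_sum i
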